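/- Let P be an n×n row-stochastic real matrix, let φ be a stationary distribution of P, let P* = 𝟙 φᵀ be the associated limiting matrix, let α ∈ [0,1), and suppose ∑_{k=0}^∞ α^k (P^k − P*) is considered as a series of n×n matrices. Then this series converges (HasSum), the matrix I − α P + α P* is invertible, and the sum equals (I − α P + α P*)⁻¹ − P*. -/

import Mathlib

open Matrix BigOperators
open scoped NNReal

attribute [local instance] Matrix.linftyOpNormedAddCommGroup Matrix.linftyOpNormedRing
  Matrix.linftyOpNormedSpace Matrix.linftyOpNormedAlgebra

/-- For row-stochastic P with stationary distribution φ and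
limiting matrix P* = 𝟙 φᵀ and α ∈ [0,1), the series ∑ₖ αᵏ (Pᵏ − P*)
converges, I − α P + α P* is invertible, and the sum equals
(I − α P + α P*)⁻¹ − P*. -/
theorem deviation_series_hasSum {n : ℕ} (hn : 1 ≤ n)
    (P : Matrix (Fin n) (Fin n) ℝ) (φ : Fin n → ℝ) (α : ℝ)
    (hα : α ∈ Set.Ico (0 : ℝ) 1)
    (hPpos : ∀ i j, 0 ≤ P i j) (hProw : ∀ i, ∑ j, P i j = 1)
    (hφpos : ∀ i, 0 ≤ φ i) (hφsum : ∑ i, φ i = 1) (hφstat : φ ᵥ* P = φ) :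
    IsUnit (1 - α • P + α • vecMulVec 1 φ).det ∧
    HasSum (fun k : ℕ => α ^ k • (P ^ k - vecMulVec 1 φ))
      ((1 - α • P + α • vecMulVec 1 φ)⁻¹ - vecMulVec 1 φ) := by
  haveI : Nonempty (Fin n) := ⟨⟨0, hn⟩⟩
  haveI : CompleteSpace (Matrix (Fin n) (Fin n) ℝ) :=
    FiniteDimensional.complete ℝ (Matrix (Fin n) (Fin n) ℝ)
  obtain ⟨hα0, hα1⟩ := hα
  set Q : Matrix (Fin n) (Fin n) ℝ := vecMulVec 1 φ with hQdef
  have hQ : ∀ i j, Q i j = φ j := fun i j => by simp [hQdef, vecMulVec]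
  have hPQ : P * Q = Q := by
    ext i j
    simp only [mul_apply, hQ, ← Finset.sum_mul, hProw, one_mul]
  have hQP : Q * P = Q := by
    ext i j
    have := congrFun hφstat j
    simp only [vecMul, dotProduct] at this
    simp only [mul_apply, hQ]
    exact this
  have hQQ : Q * Q = Q := by
    ext i j
    simp only [mul_apply, hQ, ← Finset.sum_mul, hφsum, one_mul]
  have hPkQ : ∀ k : ℕ, P ^ k * Q = Q := by
    intro k
    induction k with
    | zero => simp
    | succ k ih => rw [pow_succ, mul_assoc, hPQ, ih]
  -- powers of P are row-stochastic
  have hPk : ∀ k : ℕ, (∀ i j, 0 ≤ (P ^ k) i j) ∧ (∀ i, ∑ j, (P ^ k) i j = 1) := by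
    intro k
    induction k with
    | zero =>
      constructor
      · intro i j; simp [Matrix.one_apply]; positivity
      · intro i; simp [Matrix.one_apply]
    | succ k ih =>
      constructor
      · intro i j
        rw [pow_succ, mul_apply]
        exact Finset.sum_nonneg fun m _ => mul_nonneg (ih.1 i m) (hPpos m j)
      · intro i
        rw [pow_succ]
        simp only [mul_apply]
        rw [Finset.sum_comm]
        calc ∑ m, ∑ j, (P ^ k) i m * P m j
            = ∑ m, (P ^ k) i m * ∑ j, P m j := by
              simp [Finset.mul_sum]
          _ = 1 := by simp [hProw, ih.2 i]
  -- a norm bound helper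
  have norm_le : ∀ (A : Matrix (Fin n) (Fin n) ℝ) (c : ℝ≥0),
      (∀ i, ∑ j, ‖A i j‖₊ ≤ c) → ‖A‖ ≤ c := by
    intro A c h
    rw [Matrix.linfty_opNorm_def]
    exact_mod_cast Finset.sup_le fun i _ => h i
  have hbound : ∀ k : ℕ, ‖P ^ k - Q‖ ≤ 2 := by
    intro k
    have := norm_le (P ^ k - Q) 2 ?_
    · exact_mod_cast this
    intro i
    calc ∑ j, ‖(P ^ k - Q) i j‖₊
        ≤ ∑ j, (‖(P ^ k) i j‖₊ + ‖Q i j‖₊) := by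
          apply Finset.sum_le_sum
          intro j _
          exact nnnorm_sub_le _ _
      _ = (∑ j, ‖(P ^ k) i j‖₊) + ∑ j, ‖Q i j‖₊ := Finset.sum_add_distrib
      _ ≤ 1 + 1 := by
          have h1 : (∑ j, ‖(P ^ k) i j‖₊ : ℝ≥0) = 1 := by
            have : ((∑ j, ‖(P ^ k) i j‖₊ : ℝ≥0) : ℝ) = 1 := by
              push_cast
              rw [show (∑ j, ‖(P ^ k) i j‖) = ∑ j, (P ^ k) i j from
                Finset.sum_congr rfl fun j _ => by
                  rw [Real.norm_eq_abs, abs_of_nonneg ((hPk k).1 i j)]]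
              exact (hPk k).2 i
            exact_mod_cast this
          have h2 : (∑ j, ‖Q i j‖₊ : ℝ≥0) = 1 := by
            have : ((∑ j, ‖Q i j‖₊ : ℝ≥0) : ℝ) = 1 := by
              push_cast
              rw [show (∑ j, ‖Q i j‖) = ∑ j, φ j from
                Finset.sum_congr rfl fun j _ => by
                  rw [hQ, Real.norm_eq_abs, abs_of_nonneg (hφpos j)]]
              exact hφsum
            exact_mod_cast this
          rw [h1, h2]
      _ = 2 := by norm_num
  set x : Matrix (Fin n) (Fin n) ℝ := α • (P - Q) with hxdef
  have hxk : ∀ k : ℕ, 1 ≤ k → x ^ k = α ^ k • (P ^ k - Q) := by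
    intro k hk
    induction k with
    | zero => omega
    | succ k ih =>
      rcases Nat.lt_or_ge k 1 with h | h
      · interval_cases k
        simp [hxdef]
      · rw [pow_succ, ih h, hxdef, Matrix.smul_mul, Matrix.mul_smul, smul_smul, ← pow_succ]
        congr 1
        rw [sub_mul, mul_sub, mul_sub, hPkQ, hQP, hQQ, ← pow_succ]
        abel
  have hxnorm : ∀ k : ℕ, ‖x ^ k‖ ≤ 2 * α ^ k := by
    intro k
    rcases Nat.eq_zero_or_pos k with rfl | hk
    · simp
    · rw [hxk k hk, norm_smul, Real.norm_eq_abs, abs_of_nonneg (pow_nonneg hα0 k)]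
      have := hbound k
      nlinarith [pow_nonneg hα0 k, norm_nonneg (P ^ k - Q)]
  have hsummable : Summable (fun k : ℕ => x ^ k) := by
    apply Summable.of_norm_bounded
      ((summable_geometric_of_lt_one hα0 hα1).mul_left 2) hxnorm
  set T : Matrix (Fin n) (Fin n) ℝ := ∑' k, x ^ k with hTdef
  have hT : HasSum (fun k : ℕ => x ^ k) T := hsummable.hasSum
  have hx0 : Filter.Tendsto (fun N : ℕ => x ^ N) Filter.atTop (nhds 0) := by
    apply squeeze_zero_norm hxnorm
    have : Filter.Tendsto (fun N : ℕ => α ^ N) Filter.atTop (nhds 0) :=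
      tendsto_pow_atTop_nhds_zero_of_lt_one hα0 hα1
    simpa using this.const_mul 2
  have hleft : (1 - x) * T = 1 := by
    have h1 : Filter.Tendsto (fun N => (1 - x) * ∑ k ∈ Finset.range N, x ^ k)
        Filter.atTop (nhds ((1 - x) * T)) := (hT.tendsto_sum_nat).const_mul _
    have h2 : (fun N => (1 - x) * ∑ k ∈ Finset.range N, x ^ k)
        = fun N => 1 - x ^ N := by
      funext N
      have := mul_geom_sum x N
      calc (1 - x) * ∑ k ∈ Finset.range N, x ^ k
          = -((x - 1) * ∑ k ∈ Finset.range N, x ^ k) := by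
            rw [← neg_sub x 1, neg_mul]
        _ = -(x ^ N - 1) := by rw [this]
        _ = 1 - x ^ N := neg_sub _ _
    rw [h2] at h1
    have h3 : Filter.Tendsto (fun N : ℕ => 1 - x ^ N) Filter.atTop
        (nhds (1 : Matrix (Fin n) (Fin n) ℝ)) := by
      simpa using tendsto_const_nhds.sub hx0
    exact tendsto_nhds_unique h1 h3
  have hright : T * (1 - x) = 1 := by
    have h1 : Filter.Tendsto (fun N => (∑ k ∈ Finset.range N, x ^ k) * (1 - x))
        Filter.atTop (nhds (T * (1 - x))) := (hT.tendsto_sum_nat).mul_const _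
    have h2 : (fun N => (∑ k ∈ Finset.range N, x ^ k) * (1 - x))
        = fun N => 1 - x ^ N := by
      funext N
      have := geom_sum_mul x N
      calc (∑ k ∈ Finset.range N, x ^ k) * (1 - x)
          = -((∑ k ∈ Finset.range N, x ^ k) * (x - 1)) := by
            rw [← neg_sub x 1, mul_neg]
        _ = -(x ^ N - 1) := by rw [this]
        _ = 1 - x ^ N := neg_sub _ _
    rw [h2] at h1
    have h3 : Filter.Tendsto (fun N : ℕ => 1 - x ^ N) Filter.atTop
        (nhds (1 : Matrix (Fin n) (Fin n) ℝ)) := by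
      simpa using tendsto_const_nhds.sub hx0
    exact tendsto_nhds_unique h1 h3
  have hE : (1 : Matrix (Fin n) (Fin n) ℝ) - α • P + α • Q = 1 - x := by
    rw [hxdef, smul_sub]; abel
  have hunit : IsUnit (1 - x) := ⟨⟨1 - x, T, hleft, hright⟩, rfl⟩
  have hinv : (1 - x)⁻¹ = T := Matrix.inv_eq_right_inv hleft
  constructor
  · rw [hE]
    exact (Matrix.isUnit_iff_isUnit_det _).mp hunit
  · rw [hE, hinv]
    have hupd := hT.update 0 ((1 : Matrix (Fin n) (Fin n) ℝ) - Q)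
    have heq : Function.update (fun k : ℕ => x ^ k) 0 ((1 : Matrix (Fin n) (Fin n) ℝ) - Q)
        = fun k : ℕ => α ^ k • (P ^ k - Q) := by
      funext k
      rcases Nat.eq_zero_or_pos k with rfl | hk
      · simp
      · rw [Function.update_of_ne (Nat.pos_iff_ne_zero.mp hk), hxk k hk]
    rw [heq] at hupd
    have : (1 : Matrix (Fin n) (Fin n) ℝ) - Q - (fun k : ℕ => x ^ k) 0 + T = T - Q := by
      simp; abel
    convert hupd using 1
    · rfl
    simp only [pow_zero]
    abel
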